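/- For every K > 0 there exists C > 0 such that the following holds: let ε ∈ (0, 1/2) and let w : ℝ² → ℝ be measurable with 0 ≤ w(x) ≤ K/ε² for almost every x and ∫_{ℝ²} w(x) dx ≤ 1. Then for every x ∈ ℝ², Gw(x) := ∫_{ℝ²} log(1/|x−y|) 1_{|x−y|≤1} w(y) dy ≤ log(1/ε) + C. -/

import Mathlib

open MeasureTheory Real intervalIntegral
open Set

/-- Euclidean norm on `ℝ²`. -/
noncomputable def vnorm (x : ℝ × ℝ) : ℝ := Real.sqrt (x.1 ^ 2 + x.2 ^ 2)

/-- Rotation `R_a` on `ℝ²`. -/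
noncomputable def vrot (a : ℝ) (x : ℝ × ℝ) : ℝ × ℝ :=
  (x.1 * Real.cos a + x.2 * Real.sin a, -x.1 * Real.sin a + x.2 * Real.cos a)

/-- Japanese bracket `⟨x⟩ = √(1+|x|²)` on `ℝ²`. -/
noncomputable def jap (x : ℝ × ℝ) : ℝ := Real.sqrt (1 + x.1 ^ 2 + x.2 ^ 2)

/-- The truncated logarithmic potential
`Gw(x) = ∫ log(1/|x−y|) 1_{|x−y|≤1} w(y) dy`. -/
noncomputable def Gfun (w : ℝ × ℝ → ℝ) (x : ℝ × ℝ) : ℝ :=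
  ∫ y : ℝ × ℝ, (if vnorm (x - y) ≤ 1 then Real.log (1 / vnorm (x - y)) else 0) * w y

lemma vnorm_nonneg (z : ℝ × ℝ) : 0 ≤ vnorm z := Real.sqrt_nonneg _

lemma measurable_vnorm : Measurable vnorm := by
  unfold vnorm; fun_prop

noncomputable def gE (ε : ℝ) (z : ℝ × ℝ) : ℝ :=
  if vnorm z ≤ ε then Real.log (ε / vnorm z) else 0

lemma gE_nonneg {ε : ℝ} (z : ℝ × ℝ) : 0 ≤ gE ε z := by
  unfold gE
  split_ifs with h
  · rcases eq_or_lt_of_le (vnorm_nonneg z) with h0 | h0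
    · simp [← h0]
    · exact Real.log_nonneg ((one_le_div h0).2 h)
  · exact le_rfl

lemma measurable_gE (ε : ℝ) : Measurable (gE ε) := by
  unfold gE
  exact Measurable.ite (measurableSet_le measurable_vnorm measurable_const)
    (Real.measurable_log.comp (measurable_const.div measurable_vnorm)) measurable_const

lemma vnorm_polarCoord_symm (p : ℝ × ℝ) : vnorm (polarCoord.symm p) = |p.1| := by
  rw [polarCoord_symm_apply]
  unfold vnorm
  simp only
  rw [mul_pow, mul_pow, ← mul_add, Real.cos_sq_add_sin_sq, mul_one, Real.sqrt_sq_eq_abs]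

lemma polar_det (p : ℝ × ℝ) :
    ((LinearMap.toContinuousLinearMap (Matrix.toLin (Module.Basis.finTwoProd ℝ) (Module.Basis.finTwoProd ℝ)
      !![Real.cos p.2, -p.1 * Real.sin p.2; Real.sin p.2, p.1 * Real.cos p.2]))).det = p.1 := by
  conv_rhs => rw [← one_mul p.1, ← Real.cos_sq_add_sin_sq p.2]
  simp only [neg_mul, LinearMap.det_toContinuousLinearMap, LinearMap.det_toLin,
    Matrix.det_fin_two_of, sub_neg_eq_add]
  ring

lemma key_iff (ε : ℝ) :
    Integrable (gE ε) ↔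
      IntegrableOn (fun p : ℝ × ℝ => |p.1| • gE ε (polarCoord.symm p)) polarCoord.target := by
  have hsm : MeasurableSet polarCoord.target := polarCoord.open_target.measurableSet
  have hinj : Set.InjOn polarCoord.symm polarCoord.target := by
    have := polarCoord.symm.injOn
    rwa [OpenPartialHomeomorph.symm_source] at this
  have key := integrableOn_image_iff_integrableOn_abs_det_fderiv_smul volume hsm
    (fun p _ => (hasFDerivAt_polarCoord_symm p).hasFDerivWithinAt) hinj (gE ε)
  rw [polarCoord.symm_image_target_eq_source] at key
  have h1 : IntegrableOn (gE ε) polarCoord.source ↔ Integrable (gE ε) := by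
    rw [IntegrableOn, Measure.restrict_congr_set polarCoord_source_ae_eq_univ,
      Measure.restrict_univ]
  rw [← h1, key]
  unfold IntegrableOn
  apply integrable_congr
  filter_upwards with p
  rw [det_fderivPolarCoordSymm p]

lemma target_mem {p : ℝ × ℝ} (hp : p ∈ polarCoord.target) : 0 < p.1 ∧ p.2 ∈ Ioo (-π) π := by
  rw [polarCoord_target] at hp
  exact ⟨hp.1, hp.2⟩

lemma target_bound {ε : ℝ} (hε : 0 < ε) (p : ℝ × ℝ) (hp : p ∈ polarCoord.target) :
    p.1 • gE ε (polarCoord.symm p) ≤ (Ioc 0 ε ×ˢ Ioo (-π) π).indicator (fun _ => ε) p := by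
  obtain ⟨hp1, hp2⟩ := target_mem hp
  rw [smul_eq_mul]
  unfold gE
  rw [vnorm_polarCoord_symm, abs_of_pos hp1]
  split_ifs with h
  · have hmem : p ∈ Ioc 0 ε ×ˢ Ioo (-π) π := ⟨⟨hp1, h⟩, hp2⟩
    rw [Set.indicator_of_mem hmem]
    have hd : 0 < ε / p.1 := div_pos hε hp1
    have hl : Real.log (ε / p.1) ≤ ε / p.1 - 1 := Real.log_le_sub_one_of_pos hd
    have he : ε / p.1 * p.1 = ε := div_mul_cancel₀ _ (ne_of_gt hp1)
    nlinarith
  · rw [mul_zero]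
    exact Set.indicator_nonneg (fun _ _ => le_of_lt hε) p

lemma hS_meas {ε : ℝ} : MeasurableSet (Ioc 0 ε ×ˢ Ioo (-π) π : Set (ℝ × ℝ)) :=
  measurableSet_Ioc.prod measurableSet_Ioo

lemma bound_integrable {ε : ℝ} :
    Integrable ((Ioc 0 ε ×ˢ Ioo (-π) π : Set (ℝ × ℝ)).indicator (fun _ => ε)) := by
  rw [integrable_indicator_iff hS_meas]
  refine integrableOn_const ?_ (by simp)
  rw [Measure.volume_eq_prod, Measure.prod_prod]
  exact (ENNReal.mul_lt_top measure_Ioc_lt_top measure_Ioo_lt_top).ne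

lemma integrable_gE {ε : ℝ} (hε : 0 < ε) : Integrable (gE ε) := by
  rw [key_iff]
  have hsymm : Measurable (polarCoord.symm : ℝ × ℝ → ℝ × ℝ) := by
    have : (polarCoord.symm : ℝ × ℝ → ℝ × ℝ)
        = fun p => (p.1 * Real.cos p.2, p.1 * Real.sin p.2) := funext polarCoord_symm_apply
    rw [this]; fun_prop
  refine Integrable.mono' (bound_integrable (ε := ε)).restrict ?_ ?_
  · exact ((measurable_fst.abs).smul ((measurable_gE ε).comp hsymm)).aestronglyMeasurable
  · rw [ae_restrict_iff' polarCoord.open_target.measurableSet]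
    filter_upwards with p hp
    obtain ⟨hp1, _⟩ := target_mem hp
    have h0 : 0 ≤ |p.1| • gE ε (polarCoord.symm p) :=
      smul_nonneg (abs_nonneg _) (gE_nonneg _)
    rw [Real.norm_of_nonneg h0, abs_of_pos hp1]
    exact target_bound hε p hp

lemma integral_gE_le {ε : ℝ} (hε : 0 < ε) : ∫ z, gE ε z ≤ 2 * π * ε ^ 2 := by
  rw [← integral_comp_polarCoord_symm (gE ε)]
  refine le_trans (integral_mono_of_nonneg ?_ (bound_integrable (ε := ε)).restrict ?_) ?_
  · refine (ae_restrict_iff' polarCoord.open_target.measurableSet).2 ?_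
    filter_upwards with p hp
    exact smul_nonneg (le_of_lt (target_mem hp).1) (gE_nonneg _)
  · refine (ae_restrict_iff' polarCoord.open_target.measurableSet).2 ?_
    filter_upwards with p hp
    exact target_bound hε p hp
  · rw [MeasureTheory.integral_indicator hS_meas, Measure.restrict_restrict hS_meas,
      Set.inter_eq_self_of_subset_left ?sub, setIntegral_const]
    case sub =>
      rw [polarCoord_target]
      exact Set.prod_mono Ioc_subset_Ioi_self (subset_refl _)
    rw [Measure.volume_eq_prod, measureReal_def, Measure.prod_prod, Real.volume_Ioc, Real.volume_Ioo,
      ← ENNReal.ofReal_mul (by linarith), smul_eq_mul,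
      ENNReal.toReal_ofReal (by have := Real.pi_pos; nlinarith)]
    have hπ := Real.pi_pos
    nlinarith

lemma claim_pt {ε : ℝ} (hε0 : 0 < ε) (hε1 : ε < 1) (x y : ℝ × ℝ) :
    (if vnorm (x - y) ≤ 1 then Real.log (1 / vnorm (x - y)) else 0) ≤
      Real.log (1 / ε) * (if vnorm (x - y) ≤ 1 then 1 else 0) + gE ε (x - y) := by
  have ht0 : 0 ≤ vnorm (x - y) := vnorm_nonneg _
  have hlogε : 0 ≤ Real.log (1 / ε) := Real.log_nonneg (by
    rw [le_div_iff₀ hε0]; linarith)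
  by_cases h1 : vnorm (x - y) ≤ 1
  · rw [if_pos h1, if_pos h1, mul_one]
    unfold gE
    by_cases h2 : vnorm (x - y) ≤ ε
    · rw [if_pos h2]
      rcases eq_or_lt_of_le ht0 with h0 | h0
      · rw [← h0]
        simp only [div_zero, Real.log_zero, add_zero]
        exact hlogε
      · have e1 : Real.log (1 / vnorm (x - y)) = -Real.log (vnorm (x - y)) := by
          rw [one_div, Real.log_inv]
        have e2 : Real.log (1 / ε) = -Real.log ε := by rw [one_div, Real.log_inv]
        have e3 : Real.log (ε / vnorm (x - y)) = Real.log ε - Real.log (vnorm (x - y)) :=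
          Real.log_div (ne_of_gt hε0) (ne_of_gt h0)
        linarith
    · rw [if_neg h2, add_zero]
      have h2' : ε < vnorm (x - y) := not_le.1 h2
      have : 1 / vnorm (x - y) ≤ 1 / ε := one_div_le_one_div_of_le hε0 (le_of_lt h2')
      have hv0 : (0:ℝ) < vnorm (x - y) := lt_trans hε0 h2'
      exact Real.log_le_log (one_div_pos.2 hv0) this
  · rw [if_neg h1, if_neg h1, mul_zero, zero_add]
    exact gE_nonneg _

/-- for vorticities of mass at most `1` bounded by `K/ε²`, the
truncated logarithmic potential satisfies `Gw(x) ≤ log(1/ε) + C` everywhere. -/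
theorem stmt_13 : ∀ K > (0:ℝ), ∃ C > (0:ℝ), ∀ ε : ℝ, ε ∈ Set.Ioo (0:ℝ) (1/2) →
    ∀ w : ℝ × ℝ → ℝ, Measurable w →
    (∀ᵐ x : ℝ × ℝ, 0 ≤ w x ∧ w x ≤ K / ε ^ 2) →
    Integrable w → (∫ x : ℝ × ℝ, w x) ≤ 1 →
    ∀ x : ℝ × ℝ, Gfun w x ≤ Real.log (1 / ε) + C := by
  intro K hK
  have hπ := Real.pi_pos
  refine ⟨2 * π * K + 1, by positivity, ?_⟩
  rintro ε ⟨hε0, hε2⟩ w hwm hwb hwi hw1 x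
  have hε1 : ε < 1 := lt_trans hε2 (by norm_num)
  have hlogε : 0 ≤ Real.log (1 / ε) := Real.log_nonneg (by rw [le_div_iff₀ hε0]; linarith)
  have hKε : 0 ≤ K / ε ^ 2 := by positivity
  have hvmeas : Measurable (fun y : ℝ × ℝ => vnorm (x - y)) :=
    measurable_vnorm.comp (measurable_const.sub measurable_id)
  have hgmeas : Measurable (fun y : ℝ × ℝ => gE ε (x - y)) :=
    (measurable_gE ε).comp (measurable_const.sub measurable_id)
  -- integrability of the pieces
  have hI1 : Integrable (fun y => (if vnorm (x - y) ≤ 1 then (1:ℝ) else 0) * w y) := by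
    refine hwi.mono ?_ ?_
    · exact ((Measurable.ite (measurableSet_le hvmeas measurable_const)
        measurable_const measurable_const).mul hwm).aestronglyMeasurable
    · filter_upwards with y
      rw [Real.norm_eq_abs, Real.norm_eq_abs, abs_mul]
      have : |if vnorm (x - y) ≤ 1 then (1:ℝ) else 0| ≤ 1 := by
        split_ifs <;> simp
      nlinarith [abs_nonneg (w y)]
  have hg1 : Integrable (fun y => gE ε (x - y)) := (integrable_gE hε0).comp_sub_left x
  have hI2 : Integrable (fun y => gE ε (x - y) * w y) := by
    refine (hg1.const_mul (K / ε ^ 2)).mono ?_ ?_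
    · exact (hgmeas.mul hwm).aestronglyMeasurable
    · filter_upwards [hwb] with y hy
      rw [Real.norm_eq_abs, Real.norm_eq_abs, abs_mul, abs_of_nonneg (gE_nonneg _),
        abs_of_nonneg hy.1, abs_of_nonneg (mul_nonneg hKε (gE_nonneg _))]
      nlinarith [gE_nonneg (ε := ε) (x - y), hy.2]
  have hD : Integrable (fun y => Real.log (1 / ε) * ((if vnorm (x - y) ≤ 1 then (1:ℝ) else 0)
      * w y) + gE ε (x - y) * w y) := (hI1.const_mul _).add hI2
  -- main comparison
  have hmain : Gfun w x ≤ ∫ y, (Real.log (1 / ε) * ((if vnorm (x - y) ≤ 1 then (1:ℝ) else 0)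
      * w y) + gE ε (x - y) * w y) := by
    refine integral_mono_of_nonneg ?_ hD ?_
    · filter_upwards [hwb] with y hy
      refine mul_nonneg ?_ hy.1
      split_ifs with h1
      · rcases eq_or_lt_of_le (vnorm_nonneg (x - y)) with h0 | h0
        · rw [← h0]; simp
        · exact Real.log_nonneg ((le_div_iff₀ h0).2 (by linarith))
      · exact le_rfl
    · filter_upwards [hwb] with y hy
      have := mul_le_mul_of_nonneg_right (claim_pt hε0 hε1 x y) hy.1
      calc (if vnorm (x - y) ≤ 1 then Real.log (1 / vnorm (x - y)) else 0) * w y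
          ≤ (Real.log (1 / ε) * (if vnorm (x - y) ≤ 1 then 1 else 0) + gE ε (x - y)) * w y :=
            this
        _ = Real.log (1 / ε) * ((if vnorm (x - y) ≤ 1 then (1:ℝ) else 0) * w y)
            + gE ε (x - y) * w y := by ring
  rw [integral_add (hI1.const_mul _) hI2, MeasureTheory.integral_const_mul] at hmain
  -- bound piece 1
  have hb1 : (∫ y, (if vnorm (x - y) ≤ 1 then (1:ℝ) else 0) * w y) ≤ 1 := by
    refine le_trans (integral_mono_ae hI1 hwi ?_) hw1
    filter_upwards [hwb] with y hy
    split_ifs with h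
    · rw [one_mul]
    · rw [zero_mul]; exact hy.1
  -- bound piece 2
  have hb2 : (∫ y, gE ε (x - y) * w y) ≤ 2 * π * K := by
    have step1 : (∫ y, gE ε (x - y) * w y) ≤ ∫ y, (K / ε ^ 2) * gE ε (x - y) := by
      refine integral_mono_ae hI2 (hg1.const_mul _) ?_
      filter_upwards [hwb] with y hy
      nlinarith [gE_nonneg (ε := ε) (x - y), hy.1, hy.2]
    rw [MeasureTheory.integral_const_mul] at step1
    have step2 : (∫ y, gE ε (x - y)) = ∫ z, gE ε z :=
      integral_sub_left_eq_self (gE ε) volume x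
    rw [step2] at step1
    refine le_trans step1 ?_
    have := mul_le_mul_of_nonneg_left (integral_gE_le hε0) hKε
    refine le_trans this (le_of_eq ?_)
    field_simp
  calc Gfun w x ≤ Real.log (1 / ε) * (∫ y, (if vnorm (x - y) ≤ 1 then (1:ℝ) else 0) * w y)
      + ∫ y, gE ε (x - y) * w y := hmain
    _ ≤ Real.log (1 / ε) * 1 + 2 * π * K := by
        refine add_le_add (mul_le_mul_of_nonneg_left hb1 hlogε) hb2
    _ ≤ Real.log (1 / ε) + (2 * π * K + 1) := by linarith
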